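/- Let E', F' ⊆ E_{<i} be such that for all u, w ∈ W_i ∪ S ∪ {v}, u can reach w in (V,E') if and only if u can reach w in (V,F'), where W_i is the set of frontier vertices (vertices incident to both an edge of E_{<i} and an edge of E_{≥i}). Then for every H ⊆ E_{≥i}, v is reachable from S in (V, E'∪H) if and only if v is reachable from S in (V, F'∪H). -/

import Mathlib

open scoped Classical
open Finset

noncomputable section

/-- `inc src tgt e x` : edge `e` is incident to vertex `x`. -/
def inc {V : Type*} (src tgt : ℕ → V) (e : ℕ) (x : V) : Prop := src e = x ∨ tgt e = x

/-- Reachability in the subgraph with edge set `A`. -/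
def Reach {V : Type*} (src tgt : ℕ → V) (A : Finset ℕ) (x y : V) : Prop :=
  Relation.ReflTransGen (fun a b => ∃ e ∈ A, src e = a ∧ tgt e = b) x y

/-- `v` is reachable from some vertex of `S` in the subgraph with edge set `A`. -/
def SReach {V : Type*} (src tgt : ℕ → V) (A : Finset ℕ) (S : Finset V) (v : V) : Prop :=
  ∃ s ∈ S, Reach src tgt A s v

/-- Probability that exactly the edges in `X` (among `e_0,…,e_{m-1}`) are present. -/
def prW (p : ℕ → ℝ) (m : ℕ) (X : Finset ℕ) : ℝ :=
  (∏ e ∈ X, p e) * ∏ e ∈ Finset.range m \ X, (1 - p e)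

/-- Probability that `v` is reachable from the seed set `S`. -/
def probReach {V : Type*} (src tgt : ℕ → V) (p : ℕ → ℝ) (m : ℕ) (S : Finset V) (v : V) : ℝ :=
  ∑ X ∈ (Finset.range m).powerset, if SReach src tgt X S v then prW p m X else 0

/-- Conditional probability of `event` given that all edges in `A` are present and
all edges in `B` are absent. -/
def condP (p : ℕ → ℝ) (m : ℕ) (A B : Finset ℕ) (event : Finset ℕ → Prop) : ℝ :=
  (∑ X ∈ (Finset.range m).powerset,
      if A ⊆ X ∧ X ∩ B = ∅ ∧ event X then prW p m X else 0) /
  (∑ X ∈ (Finset.range m).powerset, if A ⊆ X ∧ X ∩ B = ∅ then prW p m X else 0)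

/-- The frontier `W_i`: vertices incident both to an edge of `E_{<i}` and to an edge of
`E_{≥ i}` (as a set). -/
def frontSet {V : Type*} (src tgt : ℕ → V) (m i : ℕ) : Set V :=
  {x | (∃ e ∈ Finset.range i, inc src tgt e x) ∧
       ∃ e ∈ Finset.range m \ Finset.range i, inc src tgt e x}

/-- The frontier `W_i` as a finset. -/
def front {V : Type*} [Fintype V] (src tgt : ℕ → V) (m i : ℕ) : Finset V :=
  Finset.univ.filter fun x =>
    (∃ e ∈ Finset.range i, inc src tgt e x) ∧
    ∃ e ∈ Finset.range m \ Finset.range i, inc src tgt e x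

/-- The shared transversal configuration `Ψ_i(A)`: the set of frontier vertices reachable
from `S`, together with the reachability relation among unreached frontier vertices. -/
def Psi {V : Type*} [Fintype V] (src tgt : ℕ → V) (m : ℕ) (S : Finset V) (i : ℕ)
    (A : Finset ℕ) : Finset V × Finset (V × V) :=
  ((front src tgt m i).filter fun x => SReach src tgt A S x,
   ((front src tgt m i) ×ˢ (front src tgt m i)).filter fun q =>
     ¬ SReach src tgt A S q.1 ∧ Reach src tgt A q.1 q.2)

/-- The transversal configuration `Φ_i^v(A)`: the sets `W_i^{S⇝}`, `W_i^{⇝v}`, the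
reachability matrix on the remaining rows/columns (with extra column `v`), and the
entry `Φ_{S,v}`. -/
def Phi {V : Type*} [Fintype V] (src tgt : ℕ → V) (m : ℕ) (S : Finset V) (i : ℕ) (v : V)
    (A : Finset ℕ) : Finset V × Finset V × Finset (V × V) × Prop :=
  ((front src tgt m i).filter fun x => SReach src tgt A S x,
   (front src tgt m i).filter fun x => Reach src tgt A x v,
   (((front src tgt m i) ∪ {v}) ×ˢ ((front src tgt m i) ∪ {v})).filter fun q =>
     (q.1 ∈ front src tgt m i ∧ ¬ SReach src tgt A S q.1) ∧
     (q.2 = v ∨ (q.2 ∈ front src tgt m i ∧ ¬ Reach src tgt A q.2 v)) ∧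
     Reach src tgt A q.1 q.2,
   SReach src tgt A S v)

/-- Probability that the shared transversal configuration `Ψ` appears at level `i`. -/
def PrPsi {V : Type*} [Fintype V] (src tgt : ℕ → V) (p : ℕ → ℝ) (m : ℕ) (S : Finset V)
    (i : ℕ) (Ψ : Finset V × Finset (V × V)) : ℝ :=
  ∑ A ∈ (Finset.range i).powerset,
    if Psi src tgt m S i A = Ψ then
      (∏ e ∈ A, p e) * ∏ e ∈ Finset.range i \ A, (1 - p e)
    else 0

/-- `IsWalk src tgt A x y es`: `es` is a directed walk from `x` to `y` using edges in `A`. -/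
def IsWalk {V : Type*} (src tgt : ℕ → V) (A : Finset ℕ) : V → V → List ℕ → Prop
  | x, y, [] => x = y
  | x, y, e :: es => e ∈ A ∧ src e = x ∧ IsWalk src tgt A (tgt e) y es


/-- A vertex is "good" if it is in the frontier, the seed set, equals `v`, or is
incident to some edge of `H`. -/
def Good3 {V : Type*} (src tgt : ℕ → V) (m i : ℕ) (S : Finset V) (v : V) (H : Finset ℕ)
    (x : V) : Prop :=
  x ∈ frontSet src tgt m i ∨ x ∈ S ∨ x = v ∨ ∃ e ∈ H, inc src tgt e x

lemma good3_upgrade {V : Type*} {src tgt : ℕ → V} {m i : ℕ} {S : Finset V} {v : V}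
    {E' H : Finset ℕ} (hE' : E' ⊆ Finset.range i)
    (hH : H ⊆ Finset.range m \ Finset.range i) {x : V}
    (hx : Good3 src tgt m i S v H x) (he : ∃ e ∈ E', inc src tgt e x) :
    x ∈ frontSet src tgt m i ∨ x ∈ S ∨ x = v := by
  rcases hx with h | h | h | ⟨e, heH, hincH⟩
  · exact Or.inl h
  · exact Or.inr (Or.inl h)
  · exact Or.inr (Or.inr h)
  · obtain ⟨f, hfE, hfinc⟩ := he
    exact Or.inl ⟨⟨f, hE' hfE, hfinc⟩, ⟨e, hH heH, hincH⟩⟩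

lemma reach_transfer3 {V : Type*} {src tgt : ℕ → V} {m i : ℕ} {S : Finset V} {v : V}
    {E' F' H : Finset ℕ} (hE' : E' ⊆ Finset.range i)
    (hH : H ⊆ Finset.range m \ Finset.range i)
    (hequiv : ∀ u w : V,
      (u ∈ frontSet src tgt m i ∨ u ∈ S ∨ u = v) →
      (w ∈ frontSet src tgt m i ∨ w ∈ S ∨ w = v) →
      (Reach src tgt E' u w ↔ Reach src tgt F' u w))
    {u w : V} (hu : Good3 src tgt m i S v H u) (hw : Good3 src tgt m i S v H w)
    (h : Reach src tgt E' u w) : Reach src tgt F' u w := by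
  by_cases huw : u = w
  · subst huw; exact Relation.ReflTransGen.refl
  · obtain ⟨b, ⟨e, heE, hsrc, _⟩, _⟩ := h.cases_head.resolve_left huw
    rcases h.cases_tail with h' | ⟨c, _, ⟨f, hfE, _, hft⟩⟩
    · exact absurd h'.symm huw
    have hu' := good3_upgrade hE' hH hu ⟨e, heE, Or.inl hsrc⟩
    have hw' := good3_upgrade hE' hH hw ⟨f, hfE, Or.inr hft⟩
    exact (hequiv u w hu' hw').mp h

lemma reach_mono3 {V : Type*} {src tgt : ℕ → V} {A B : Finset ℕ} (hAB : A ⊆ B)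
    {x y : V} (h : Reach src tgt A x y) : Reach src tgt B x y :=
  Relation.ReflTransGen.mono (r := fun a b => ∃ e ∈ A, src e = a ∧ tgt e = b)
    (fun _ _ ⟨e, he, h1, h2⟩ => ⟨e, hAB he, h1, h2⟩) x y h

lemma sreach_transfer3 {V : Type*} {src tgt : ℕ → V} {m i : ℕ} {S : Finset V} {v : V}
    {E' F' H : Finset ℕ} (hE' : E' ⊆ Finset.range i)
    (hH : H ⊆ Finset.range m \ Finset.range i)
    (hequiv : ∀ u w : V,
      (u ∈ frontSet src tgt m i ∨ u ∈ S ∨ u = v) →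
      (w ∈ frontSet src tgt m i ∨ w ∈ S ∨ w = v) →
      (Reach src tgt E' u w ↔ Reach src tgt F' u w))
    (hsv : SReach src tgt (E' ∪ H) S v) : SReach src tgt (F' ∪ H) S v := by
  obtain ⟨s, hs, hr⟩ := hsv
  suffices h : ∀ x, Reach src tgt (E' ∪ H) x v →
      ∀ u, Good3 src tgt m i S v H u → Reach src tgt E' u x →
      Reach src tgt (F' ∪ H) u v by
    exact ⟨s, hs, h s hr s (Or.inr (Or.inl hs)) Relation.ReflTransGen.refl⟩
  intro x hx
  induction hx using Relation.ReflTransGen.head_induction_on with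
  | refl =>
    intro u hu hur
    have hv : Good3 src tgt m i S v H v := Or.inr (Or.inr (Or.inl rfl))
    exact reach_mono3 Finset.subset_union_left (reach_transfer3 hE' hH hequiv hu hv hur)
  | head hstep _ ih =>
    intro u hu hur
    obtain ⟨e, heU, hsrc, htgt⟩ := hstep
    rcases Finset.mem_union.mp heU with heE | heH
    · exact ih u hu (hur.tail ⟨e, heE, hsrc, htgt⟩)
    · have hxg : Good3 src tgt m i S v H _ :=
        Or.inr (Or.inr (Or.inr ⟨e, heH, Or.inl hsrc⟩))
      have h1 : Reach src tgt (F' ∪ H) u _ :=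
        reach_mono3 Finset.subset_union_left (reach_transfer3 hE' hH hequiv hu hxg hur)
      have h2 : Reach src tgt (F' ∪ H) u _ :=
        h1.tail ⟨e, Finset.mem_union_right _ heH, hsrc, htgt⟩
      exact h2.trans (ih _ (Or.inr (Or.inr (Or.inr ⟨e, heH, Or.inr htgt⟩)))
        Relation.ReflTransGen.refl)

/-- If `E', F' ⊆ E_{<i}` induce the same reachability relation on `W_i ∪ S ∪ {v}`, then
for every `H ⊆ E_{≥i}`, `S ⇝ v` in `(V, E' ∪ H)` iff `S ⇝ v` in `(V, F' ∪ H)`. -/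
theorem stmt3 {V : Type*} (src tgt : ℕ → V) (m i : ℕ) (him : i ≤ m)
    (S : Finset V) (v : V) (E' F' : Finset ℕ)
    (hE' : E' ⊆ Finset.range i) (hF' : F' ⊆ Finset.range i)
    (hequiv : ∀ u w : V,
      (u ∈ frontSet src tgt m i ∨ u ∈ S ∨ u = v) →
      (w ∈ frontSet src tgt m i ∨ w ∈ S ∨ w = v) →
      (Reach src tgt E' u w ↔ Reach src tgt F' u w)) :
    ∀ H ⊆ Finset.range m \ Finset.range i,
      (SReach src tgt (E' ∪ H) S v ↔ SReach src tgt (F' ∪ H) S v) := by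
  intro H hH
  constructor
  · exact sreach_transfer3 hE' hH hequiv
  · exact sreach_transfer3 hF' hH (fun u w hu hw => (hequiv u w hu hw).symm)

end
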